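/- Let G be a disjoint union of Δ(G)+1 copies of a graph G (denote this union by 𝒢). Then Tr(G) = k if and only if TTr(𝒢) = k. In particular, TTr(𝒢) = Tr(G). -/

import Mathlib

open SimpleGraph

variable {V : Type*}

/-- `A` dominates `B` if every vertex of `B` has a neighbour in `A`. -/
def Dominates (G : SimpleGraph V) (A B : Set V) : Prop :=
  ∀ b ∈ B, ∃ a ∈ A, G.Adj a b

/-- An ordered partition `V₁,…,V_k` (encoded as `f : V → Fin k`, surjective,
with `V_i = f ⁻¹' {i}`) is a transitive partition if `V_i` dominates `V_j` for `i < j`. -/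
def IsTrPartition (G : SimpleGraph V) {k : ℕ} (f : V → Fin k) : Prop :=
  Function.Surjective f ∧
    ∀ i j : Fin k, i < j → Dominates G (f ⁻¹' {i}) (f ⁻¹' {j})

/-- Tournament transitive partition: additionally `V_j` does not dominate `V_i` for `i < j`. -/
def IsTTPartition (G : SimpleGraph V) {k : ℕ} (f : V → Fin k) : Prop :=
  Function.Surjective f ∧
    ∀ i j : Fin k, i < j →
      Dominates G (f ⁻¹' {i}) (f ⁻¹' {j}) ∧ ¬ Dominates G (f ⁻¹' {j}) (f ⁻¹' {i})

/-- Transitivity: the maximum size of a transitive partition. -/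
noncomputable def Tr (G : SimpleGraph V) : ℕ :=
  sSup {k | ∃ f : V → Fin k, IsTrPartition G f}

/-- Tournament transitivity: the maximum size of a tournament transitive partition. -/
noncomputable def TTr (G : SimpleGraph V) : ℕ :=
  sSup {k | ∃ f : V → Fin k, IsTTPartition G f}

/-- The disjoint union of `m` copies of `G`. -/
def copies (m : ℕ) (G : SimpleGraph V) : SimpleGraph (Fin m × V) where
  Adj u v := u.1 = v.1 ∧ G.Adj u.2 v.2
  symm := ⟨fun u v h => ⟨h.1.symm, G.symm.symm _ _ h.2⟩⟩
  loopless := ⟨fun u h => G.loopless.irrefl u.2 h.2⟩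

/-- Any transitive partition has at most Δ+1 parts. -/
lemma tr_bound [Fintype V] (G : SimpleGraph V) [DecidableRel G.Adj] {k : ℕ}
    (f : V → Fin k) (hf : IsTrPartition G f) : k ≤ G.maxDegree + 1 := by
  cases k with
  | zero => omega
  | succ n =>
    obtain ⟨v, hv⟩ := hf.1 (Fin.last n)
    have hdom : ∀ i : Fin n, ∃ w, f w = i.castSucc ∧ G.Adj w v := by
      intro i
      obtain ⟨w, hw1, hw2⟩ := hf.2 i.castSucc (Fin.last n) (Fin.castSucc_lt_last i) v (by simp [hv])
      exact ⟨w, by simpa using hw1, hw2⟩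
    choose w hw1 hw2 using hdom
    have hcard : (Finset.univ : Finset (Fin n)).card ≤ (G.neighborFinset v).card := by
      apply Finset.card_le_card_of_injOn w
      · intro i _
        simpa [SimpleGraph.mem_neighborFinset] using (hw2 i).symm
      · intro i _ j _ hij
        have h2 : (i.castSucc : Fin (n+1)) = j.castSucc := by rw [← hw1 i, ← hw1 j, hij]
        exact Fin.castSucc_injective n h2
    have hdeg : (G.neighborFinset v).card = G.degree v := rfl
    have hmax := G.degree_le_maxDegree v
    simp only [Finset.card_univ, Fintype.card_fin, hdeg] at hcard
    omega

lemma forward [Fintype V] (G : SimpleGraph V) [DecidableRel G.Adj] {k : ℕ}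
    (f : V → Fin k) (hf : IsTrPartition G f) :
    ∃ g : Fin (G.maxDegree + 1) × V → Fin k, IsTTPartition (copies (G.maxDegree + 1) G) g := by
  have hk := tr_bound G f hf
  set D := G.maxDegree with hD
  refine ⟨fun p => ⟨min (f p.2).val p.1.val, lt_of_le_of_lt (min_le_left _ _) (f p.2).isLt⟩,
    ?_, ?_⟩
  · intro i
    obtain ⟨v, hv⟩ := hf.1 i
    refine ⟨(⟨D, by omega⟩, v), ?_⟩
    have hi : i.val ≤ D := by have := i.isLt; omega
    ext
    simp [hv, min_eq_left hi]
  · intro i j hij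
    have hijv : i.val < j.val := hij
    constructor
    · rintro ⟨t, v⟩ hb
      simp only [Set.mem_preimage, Set.mem_singleton_iff] at hb
      have hbv : min (f v).val t.val = j.val := congrArg Fin.val hb
      have hjf : j.val ≤ (f v).val := hbv ▸ min_le_left _ _
      have hjt : j.val ≤ t.val := hbv ▸ min_le_right _ _
      have hifv : i < f v := by
        have h : i.val < (f v).val := by omega
        exact h
      obtain ⟨w, hw, hadj⟩ := hf.2 i (f v) hifv v (by simp)
      simp only [Set.mem_preimage, Set.mem_singleton_iff] at hw
      refine ⟨(t, w), ?_, ?_⟩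
      · simp only [Set.mem_preimage, Set.mem_singleton_iff]
        ext
        simp [hw, min_eq_left (by omega : i.val ≤ t.val)]
      · exact ⟨rfl, hadj⟩
    · intro hdom
      obtain ⟨v, hv⟩ := hf.1 j
      have hiD : i.val < D + 1 := by have := i.isLt; omega
      obtain ⟨a, ha, hadj⟩ := hdom (⟨i.val, hiD⟩, v) (by
        simp only [Set.mem_preimage, Set.mem_singleton_iff]
        ext
        simp [hv, min_eq_right (le_of_lt hijv)])
      simp only [Set.mem_preimage, Set.mem_singleton_iff] at ha
      have ha1 : a.1 = (⟨i.val, hiD⟩ : Fin (D+1)) := hadj.1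
      have hav : min (f a.2).val a.1.val = j.val := congrArg Fin.val ha
      rw [ha1] at hav
      have : j.val ≤ i.val := hav ▸ min_le_right (f a.2).val i.val
      omega

lemma backward {m k : ℕ} (hm : 0 < m) (G : SimpleGraph V)
    (g : Fin m × V → Fin k) (hg : IsTrPartition (copies m G) g) :
    ∃ f : V → Fin k, IsTrPartition G f := by
  cases k with
  | zero =>
    have hV : IsEmpty V := ⟨fun v => (g (⟨0, hm⟩, v)).elim0⟩
    exact ⟨fun v => (hV.elim v), fun i => i.elim0, fun i => i.elim0⟩
  | succ n =>
    obtain ⟨⟨t, v⟩, hv⟩ := hg.1 (Fin.last n)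
    refine ⟨fun w => g (t, w), ?_, ?_⟩
    · intro i
      rcases eq_or_lt_of_le (Fin.le_last i) with h | h
      · exact ⟨v, h ▸ hv⟩
      · obtain ⟨a, ha, hadj⟩ := hg.2 i (Fin.last n) h (t, v) (by simp [hv])
        simp only [Set.mem_preimage, Set.mem_singleton_iff] at ha
        obtain ⟨a1, a2⟩ := a
        have hta : a1 = t := hadj.1
        exact ⟨a2, by rw [← hta]; exact ha⟩
    · intro i j hij b hb
      simp only [Set.mem_preimage, Set.mem_singleton_iff] at hb
      obtain ⟨a, ha, hadj⟩ := hg.2 i j hij (t, b) (by simp [hb])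
      simp only [Set.mem_preimage, Set.mem_singleton_iff] at ha
      obtain ⟨a1, a2⟩ := a
      have hta : a1 = t := hadj.1
      refine ⟨a2, ?_, hadj.2⟩
      simp only [Set.mem_preimage, Set.mem_singleton_iff]
      rw [← hta]
      exact ha

theorem stmt_16 [Fintype V] (G : SimpleGraph V) [DecidableRel G.Adj] :
    (∀ k : ℕ, Tr G = k ↔ TTr (copies (G.maxDegree + 1) G) = k) ∧
      TTr (copies (G.maxDegree + 1) G) = Tr G := by
  have hset : {k | ∃ f : V → Fin k, IsTrPartition G f} =
      {k | ∃ g : Fin (G.maxDegree + 1) × V → Fin k,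
        IsTTPartition (copies (G.maxDegree + 1) G) g} := by
    ext k
    constructor
    · rintro ⟨f, hf⟩
      exact forward G f hf
    · rintro ⟨g, hg⟩
      exact backward (Nat.succ_pos _) G g ⟨hg.1, fun i j h => (hg.2 i j h).1⟩
  have hmain : TTr (copies (G.maxDegree + 1) G) = Tr G := by
    unfold TTr Tr
    rw [hset]
  exact ⟨fun k => by rw [hmain], hmain⟩
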